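/- Let k ∈ ℤ and n ∈ ℕ. Consider leaky-cover graph data: finite sets V (vertices) and E (internal edges) with maps s, t : E → V (left and right endpoints) and ω : E → ℤ (edge weights); a leg assignment a : Fin n → V with leg weights x : Fin n → ℤ; and a genus function g : V → ℕ. For v ∈ V set val(v) = #{i | a(i) = v} + #{e | s(e) = v} + #{e | t(e) = v}. Assume that for every v ∈ V the k-leaky balancing condition holds: (Σ_{i : a(i) = v} x_i) + (Σ_{e : t(e) = v} ω(e)) − (Σ_{e : s(e) = v} ω(e)) = k·(2·g(v) − 2 + val(v)). Then Σ_{i=1}^{n} x_i = k·(2G − 2 + n), where G = (Σ_{v ∈ V} g(v)) + #E − #V + 1. -/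
import Mathlib


/-- For leaky-cover graph data (finite vertex set `V`, finite
edge set `E` with endpoint maps `s t : E → V`, edge weights `ω : E → ℤ`, leg
assignment `a : Fin n → V` with leg weights `x : Fin n → ℤ`, genus `g : V → ℕ`),
if the `k`-leaky balancing condition holds at every vertex, then
`∑ x i = k * (2G - 2 + n)` where `G = (∑ g v) + #E - #V + 1`. -/
theorem leaky_degree_relation (k : ℤ) (n : ℕ)
    (V E : Type) [Fintype V] [DecidableEq V] [Fintype E]
    (s t : E → V) (ω : E → ℤ) (a : Fin n → V) (x : Fin n → ℤ) (g : V → ℕ)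
    (hbal : ∀ v : V,
      (∑ i ∈ Finset.univ.filter (fun i => a i = v), x i)
        + (∑ e ∈ Finset.univ.filter (fun e => t e = v), ω e)
        - (∑ e ∈ Finset.univ.filter (fun e => s e = v), ω e)
      = k * (2 * (g v : ℤ) - 2
          + (((Finset.univ.filter (fun i => a i = v)).card
            + (Finset.univ.filter (fun e => s e = v)).card
            + (Finset.univ.filter (fun e => t e = v)).card : ℕ) : ℤ))) :
    ∑ i, x i
      = k * (2 * ((∑ v, (g v : ℤ)) + (Fintype.card E : ℤ) - (Fintype.card V : ℤ) + 1)
          - 2 + (n : ℤ)) := by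
  have H := Finset.sum_congr rfl (fun v (_ : v ∈ Finset.univ) => hbal v)
  have hx : ∑ v, ∑ i ∈ Finset.univ.filter (fun i => a i = v), x i = ∑ i, x i :=
    Finset.sum_fiberwise _ _ _
  have ht : ∑ v, ∑ e ∈ Finset.univ.filter (fun e => t e = v), ω e = ∑ e, ω e :=
    Finset.sum_fiberwise _ _ _
  have hs : ∑ v, ∑ e ∈ Finset.univ.filter (fun e => s e = v), ω e = ∑ e, ω e :=
    Finset.sum_fiberwise _ _ _
  have ca : ∑ v, ((Finset.univ.filter (fun i => a i = v)).card : ℤ) = (n : ℤ) := by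
    rw [← Nat.cast_sum]
    rw [← Finset.card_eq_sum_card_fiberwise (fun i _ => Finset.mem_univ (a i))]
    simp
  have cs : ∑ v, ((Finset.univ.filter (fun e => s e = v)).card : ℤ) = (Fintype.card E : ℤ) := by
    rw [← Nat.cast_sum]
    rw [← Finset.card_eq_sum_card_fiberwise (fun e _ => Finset.mem_univ (s e))]
    rfl
  have ct : ∑ v, ((Finset.univ.filter (fun e => t e = v)).card : ℤ) = (Fintype.card E : ℤ) := by
    rw [← Nat.cast_sum]
    rw [← Finset.card_eq_sum_card_fiberwise (fun e _ => Finset.mem_univ (t e))]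
    rfl
  have cV : ∑ _v : V, (2 : ℤ) = 2 * (Fintype.card V : ℤ) := by
    rw [Finset.sum_const, Finset.card_univ]; ring
  calc ∑ i, x i
      = ∑ v, ((∑ i ∈ Finset.univ.filter (fun i => a i = v), x i)
        + (∑ e ∈ Finset.univ.filter (fun e => t e = v), ω e)
        - (∑ e ∈ Finset.univ.filter (fun e => s e = v), ω e)) := by
        simp only [Finset.sum_sub_distrib, Finset.sum_add_distrib, hx, ht, hs]; ring
    _ = ∑ v, k * (2 * (g v : ℤ) - 2
          + (((Finset.univ.filter (fun i => a i = v)).card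
            + (Finset.univ.filter (fun e => s e = v)).card
            + (Finset.univ.filter (fun e => t e = v)).card : ℕ) : ℤ)) := H
    _ = k * (2 * ((∑ v, (g v : ℤ)) + (Fintype.card E : ℤ) - (Fintype.card V : ℤ) + 1)
          - 2 + (n : ℤ)) := by
        rw [← Finset.mul_sum]
        push_cast
        simp only [Finset.sum_add_distrib, Finset.sum_sub_distrib, ← Finset.mul_sum,
          ca, cs, ct, cV]
        ring
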